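/- Let (X,d) be a metric space and μ a Borel measure on X that is positive and finite on every open ball; fix x₀ ∈ X and write B_ρ := B(x₀,ρ). Let 1 < p < s̄, let R₁ > 0, and assume there is C₁ > 0 such that μ(B_ρ) ≥ C₁·ρ^{s̄} for all 0 < ρ ≤ R₁. Then for all 0 < r < R₁ one has ∫_r^{R₁} (ρ/μ(B_ρ))^{1/(p−1)} dρ ≤ C₁^{−p/(s̄(p−1))} · μ(B_r)^{−(s̄−p)/(s̄(p−1))} · log(R₁/r). -/

import Mathlib

open MeasureTheory Metric
open scoped ENNReal

lemma ennreal_div_div (a b c : ℝ≥0∞) (hb : b ≠ 0) (hb' : b ≠ ⊤) :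
    a / b / c = a / (b * c) := by
  rw [div_eq_mul_inv, div_eq_mul_inv, div_eq_mul_inv,
    ENNReal.mul_inv (Or.inl hb) (Or.inl hb'), mul_assoc]

/-- **Pointwise estimate from the proof of Theorem 6.1.** If `1 < p < s̄` and
`μ(B_ρ) ≥ C₁ ρ^{s̄}` for `0 < ρ ≤ R₁`, then for all `0 < r < R₁`,
`∫_r^{R₁} (ρ/μ(B_ρ))^{1/(p−1)} dρ
  ≤ C₁^{−p/(s̄(p−1))} μ(B_r)^{−(s̄−p)/(s̄(p−1))} log(R₁/r)`. -/
theorem integral_estimate_lower_mass_bound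
    {X : Type*} [MetricSpace X] [MeasurableSpace X] [BorelSpace X]
    (μ : Measure X) (x₀ : X)
    (hpos : ∀ r : ℝ, 0 < r → 0 < μ (ball x₀ r))
    (hfin : ∀ r : ℝ, μ (ball x₀ r) < ⊤)
    (p s : ℝ) (hp : 1 < p) (hps : p < s)
    (R₁ C₁ : ℝ) (hR₁ : 0 < R₁) (hC₁ : 0 < C₁)
    (hmass : ∀ ρ : ℝ, 0 < ρ → ρ ≤ R₁ → ENNReal.ofReal (C₁ * ρ ^ s) ≤ μ (ball x₀ ρ))
    (r : ℝ) (hr : 0 < r) (hrR : r < R₁) :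
    (∫⁻ ρ in Set.Ioc r R₁, (ENNReal.ofReal ρ / μ (ball x₀ ρ)) ^ (1 / (p - 1)))
      ≤ ENNReal.ofReal (C₁ ^ (-(p / (s * (p - 1))))) *
          (μ (ball x₀ r)) ^ (-((s - p) / (s * (p - 1)))) *
          ENNReal.ofReal (Real.log (R₁ / r)) := by
  have hp1 : (0:ℝ) < p - 1 := by linarith
  have hs : (0:ℝ) < s := by linarith
  set q : ℝ := 1 / (p - 1) with hqdef
  have hq0 : 0 < q := by positivity
  set m := μ (ball x₀ r) with hm
  have hm0 : m ≠ 0 := (hpos r hr).ne'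
  have hmtop : m ≠ ⊤ := (hfin r).ne
  set c := ENNReal.ofReal (C₁ ^ (-(p / (s * (p - 1))))) *
      m ^ (-((s - p) / (s * (p - 1)))) with hc
  have key : ∀ ρ ∈ Set.Ioc r R₁,
      (ENNReal.ofReal ρ / μ (ball x₀ ρ)) ^ q ≤ c * ENNReal.ofReal ρ⁻¹ := by
    rintro ρ ⟨hρr, hρR⟩
    have hρ0 : 0 < ρ := hr.trans hρr
    set M := μ (ball x₀ ρ) with hM
    have hM0 : M ≠ 0 := (hpos ρ hρ0).ne'
    have hMtop : M ≠ ⊤ := (hfin ρ).ne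
    have hmM : m ≤ M := measure_mono (ball_subset_ball hρr.le)
    have hA0 : (0:ℝ) < C₁ ^ (p / s) * ρ ^ p := by positivity
    have hsplit : M ^ (p / s) * M ^ ((s - p) / s) = M := by
      rw [← ENNReal.rpow_add _ _ hM0 hMtop]
      have h1 : p / s + (s - p) / s = 1 := by field_simp; ring
      rw [h1, ENNReal.rpow_one]
    have h1 : ENNReal.ofReal (C₁ ^ (p / s) * ρ ^ p) ≤ M ^ (p / s) := by
      have hcalc : (C₁ * ρ ^ s) ^ (p / s) = C₁ ^ (p / s) * ρ ^ p := by
        rw [Real.mul_rpow hC₁.le (by positivity), ← Real.rpow_mul hρ0.le]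
        congr 1
        field_simp
      calc ENNReal.ofReal (C₁ ^ (p / s) * ρ ^ p)
          = (ENNReal.ofReal (C₁ * ρ ^ s)) ^ (p / s) := by
            rw [← hcalc, ENNReal.ofReal_rpow_of_pos (show (0:ℝ) < C₁ * ρ ^ s by positivity)]
        _ ≤ M ^ (p / s) := ENNReal.rpow_le_rpow (hmass ρ hρ0 hρR) (div_nonneg (by linarith) hs.le)
    have h2 : m ^ ((s - p) / s) ≤ M ^ ((s - p) / s) :=
      ENNReal.rpow_le_rpow hmM (div_nonneg (by linarith) hs.le)
    have hstep : ENNReal.ofReal ρ / M ≤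
        ENNReal.ofReal (ρ / (C₁ ^ (p / s) * ρ ^ p)) / m ^ ((s - p) / s) := by
      rw [ENNReal.ofReal_div_of_pos hA0,
        ennreal_div_div _ _ _ (ENNReal.ofReal_pos.mpr hA0).ne' ENNReal.ofReal_ne_top]
      exact ENNReal.div_le_div_left ((mul_le_mul' h1 h2).trans hsplit.le) _
    have hpow := ENNReal.rpow_le_rpow hstep hq0.le
    refine le_trans hpow (le_of_eq ?_)
    have hreal : (ρ / (C₁ ^ (p / s) * ρ ^ p)) ^ q
        = C₁ ^ (-(p / (s * (p - 1)))) * ρ⁻¹ := by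
      have hρA : ρ / (C₁ ^ (p / s) * ρ ^ p) = C₁ ^ (-(p / s)) * ρ ^ (1 - p) := by
        rw [Real.rpow_neg hC₁.le, Real.rpow_sub hρ0, Real.rpow_one]
        field_simp
      rw [hρA, Real.mul_rpow (by positivity) (by positivity),
        ← Real.rpow_mul hC₁.le, ← Real.rpow_mul hρ0.le]
      have e1 : -(p / s) * q = -(p / (s * (p - 1))) := by
        rw [hqdef]; field_simp
      have e2 : (1 - p) * q = -1 := by
        rw [hqdef]; field_simp; ring
      rw [e1, e2, Real.rpow_neg_one]
    have hexp : -((s - p) / s * q) = -((s - p) / (s * (p - 1))) := by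
      rw [hqdef]; field_simp
    rw [ENNReal.div_rpow_of_nonneg _ _ hq0.le,
      ENNReal.ofReal_rpow_of_pos (show (0:ℝ) < ρ / (C₁ ^ (p / s) * ρ ^ p) by positivity),
      ← ENNReal.rpow_mul, hreal, ENNReal.ofReal_mul (by positivity),
      div_eq_mul_inv, ← ENNReal.rpow_neg, hexp, hc]
    ring
  have hfmeas : Measurable fun ρ : ℝ => ENNReal.ofReal ρ⁻¹ :=
    ENNReal.measurable_ofReal.comp measurable_inv
  have hlog : ∫⁻ ρ in Set.Ioc r R₁, ENNReal.ofReal ρ⁻¹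
      = ENNReal.ofReal (Real.log (R₁ / r)) := by
    have hint : IntegrableOn (fun ρ : ℝ => ρ⁻¹) (Set.Ioc r R₁) := by
      apply (ContinuousOn.integrableOn_Icc ?_).mono_set Set.Ioc_subset_Icc_self
      exact ContinuousOn.inv₀ continuousOn_id fun x hx => (hr.trans_le hx.1).ne'
    have hnn : 0 ≤ᵐ[volume.restrict (Set.Ioc r R₁)] fun ρ : ℝ => ρ⁻¹ := by
      filter_upwards [ae_restrict_mem measurableSet_Ioc] with x hx
      exact inv_nonneg.2 (hr.trans hx.1).le
    rw [← MeasureTheory.ofReal_integral_eq_lintegral_ofReal hint hnn]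
    congr 1
    rw [← intervalIntegral.integral_of_le hrR.le]
    exact integral_inv (by
      rw [Set.uIcc_of_le hrR.le]
      exact fun h => absurd h.1 (not_le.mpr hr))
  calc ∫⁻ ρ in Set.Ioc r R₁, (ENNReal.ofReal ρ / μ (ball x₀ ρ)) ^ q
      ≤ ∫⁻ ρ in Set.Ioc r R₁, c * ENNReal.ofReal ρ⁻¹ :=
        setLIntegral_mono (hfmeas.const_mul c) key
    _ = c * ∫⁻ ρ in Set.Ioc r R₁, ENNReal.ofReal ρ⁻¹ := lintegral_const_mul c hfmeas
    _ = c * ENNReal.ofReal (Real.log (R₁ / r)) := by rw [hlog]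
    _ = _ := by rw [hc]
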